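/- arXiv:2403.13609 — 2 statements merged into one kernel-verified Lean document; each statement's English description precedes it below -/
import Mathlib

section
/- Let a > 0 and let p = (x, y, z) ∈ ℝ³ be the point with bispherical coordinates (ξ, η, φ), ξ ∈ (0, π), i.e., x = a sinh η/(cosh η − cos ξ), y = a sin ξ cos φ/(cosh η − cos ξ), z = a sin ξ sin φ/(cosh η − cos ξ). Let F₊ = (a,0,0), F₋ = (−a,0,0). Then the angle at p in the triangle F₊ p F₋ equals ξ, i.e., the inner product of the unit vectors from p to F₊ and from p to F₋ equals cos ξ. -/
/-- For a point `p` with bispherical coordinates `(ξ, η, φ)`, `ξ ∈ (0, π)`, and foci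
`F₊ = (a,0,0)`, `F₋ = (−a,0,0)`, the inner product of the unit vectors from `p` to the two
foci equals `cos ξ`, i.e. the angle at `p` in the triangle `F₊ p F₋` is `ξ`. -/
theorem bispherical_first_coordinate_is_angle (a η ξ φ : ℝ) (ha : 0 < a)
    (hξ : ξ ∈ Set.Ioo 0 Real.pi)
    (p Fp Fm : EuclideanSpace ℝ (Fin 3))
    (hp : p = ![a * Real.sinh η / (Real.cosh η - Real.cos ξ),
          a * Real.sin ξ * Real.cos φ / (Real.cosh η - Real.cos ξ),
          a * Real.sin ξ * Real.sin φ / (Real.cosh η - Real.cos ξ)])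
    (hFp : Fp = ![a, 0, 0]) (hFm : Fm = ![-a, 0, 0]) :
    inner ℝ (‖Fp - p‖⁻¹ • (Fp - p)) (‖Fm - p‖⁻¹ • (Fm - p)) = Real.cos ξ := by
  obtain ⟨hξ0, hξπ⟩ := hξ
  have hcos : Real.cos ξ < 1 := by
    have := Real.cos_lt_cos_of_nonneg_of_le_pi le_rfl hξπ.le hξ0
    simpa using this
  have hd : 0 < Real.cosh η - Real.cos ξ := by
    have := Real.one_le_cosh η
    linarith
  have hexp : Real.exp η * Real.exp (-η) = 1 := by
    rw [← Real.exp_add]; simp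
  have hAuv : (inner ℝ (Fp - p) (Fm - p) : ℝ)
      = 2 * a ^ 2 * Real.cos ξ / (Real.cosh η - Real.cos ξ) := by
    simp only [hp, hFp, hFm, PiLp.inner_apply, Fin.sum_univ_three, PiLp.sub_apply,
      Matrix.cons_val_zero, Matrix.cons_val_one, Matrix.head_cons,
      Matrix.cons_val_two, Matrix.tail_cons, RCLike.inner_apply, conj_trivial]
    field_simp
    linear_combination (a*Real.sin ξ)^2*(Real.sin_sq_add_cos_sq φ)
      + a^2*(Real.sin_sq_add_cos_sq ξ)
      - a^2*(Real.cosh_sq η)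
  have hAu : (inner ℝ (Fp - p) (Fp - p) : ℝ)
      = 2 * a ^ 2 * Real.exp (-η) / (Real.cosh η - Real.cos ξ) := by
    simp only [hp, hFp, hFm, PiLp.inner_apply, Fin.sum_univ_three, PiLp.sub_apply,
      Matrix.cons_val_zero, Matrix.cons_val_one, Matrix.head_cons,
      Matrix.cons_val_two, Matrix.tail_cons, RCLike.inner_apply, conj_trivial]
    field_simp
    linear_combination (a*Real.sin ξ)^2*(Real.sin_sq_add_cos_sq φ)
      + a^2*(Real.sin_sq_add_cos_sq ξ)
      - a^2*(Real.cosh_sq η)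
      + 2*a^2*(Real.cosh η - Real.cos ξ)*(Real.cosh_sub_sinh η)
  have hAv : (inner ℝ (Fm - p) (Fm - p) : ℝ)
      = 2 * a ^ 2 * Real.exp η / (Real.cosh η - Real.cos ξ) := by
    simp only [hp, hFp, hFm, PiLp.inner_apply, Fin.sum_univ_three, PiLp.sub_apply,
      Matrix.cons_val_zero, Matrix.cons_val_one, Matrix.head_cons,
      Matrix.cons_val_two, Matrix.tail_cons, RCLike.inner_apply, conj_trivial]
    field_simp
    linear_combination (a*Real.sin ξ)^2*(Real.sin_sq_add_cos_sq φ)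
      + a^2*(Real.sin_sq_add_cos_sq ξ)
      - a^2*(Real.cosh_sq η)
      + 2*a^2*(Real.cosh η - Real.cos ξ)*(Real.cosh_add_sinh η)
  set d := Real.cosh η - Real.cos ξ with hdef
  have hnu : ‖Fp - p‖ = Real.sqrt (2 * a ^ 2 * Real.exp (-η) / d) := by
    rw [norm_eq_sqrt_real_inner, hAu]
  have hnv : ‖Fm - p‖ = Real.sqrt (2 * a ^ 2 * Real.exp η / d) := by
    rw [norm_eq_sqrt_real_inner, hAv]
  rw [real_inner_smul_left, real_inner_smul_right, hAuv, hnu, hnv, ← mul_assoc,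
    ← Real.sqrt_inv, ← Real.sqrt_inv, ← Real.sqrt_mul (by positivity)]
  have hxy : (2 * a ^ 2 * Real.exp (-η) / d) * (2 * a ^ 2 * Real.exp η / d)
      = (2 * a ^ 2 / d) ^ 2 := by
    field_simp
    linear_combination hexp
  have hprod : (2 * a ^ 2 * Real.exp (-η) / d)⁻¹ * (2 * a ^ 2 * Real.exp η / d)⁻¹
      = (d / (2 * a ^ 2)) ^ 2 := by
    rw [← mul_inv, hxy, ← inv_pow, inv_div]
  rw [hprod, Real.sqrt_sq (by positivity)]
  field_simp
end

section
/- Let two triangles p₁p₂p₃ and q₁q₂q₃ in ℝ³ satisfy: ‖p₂ − p₁‖ = ‖q₂ − q₁‖ > 0, the angles at the third vertex are equal (ξ₃ = ξ₃*), and the ratios ‖p₃ − p₁‖/‖p₃ − p₂‖ = ‖q₃ − q₁‖/‖q₃ − q₂‖ (with all points distinct). Then all corresponding side lengths are equal: ‖p₃ − p₁‖ = ‖q₃ − q₁‖ and ‖p₃ − p₂‖ = ‖q₃ − q₂‖. -/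
open EuclideanGeometry

/-- Two triangles in ℝ³ with equal (positive) base lengths, equal apex angles at the third
vertex, equal ratios of the other two sides, and pairwise distinct vertices have all
corresponding side lengths equal. -/
theorem triangle_determined_by_base_apexAngle_ratio
    (p₁ p₂ p₃ q₁ q₂ q₃ : EuclideanSpace ℝ (Fin 3))
    (hp12 : p₁ ≠ p₂) (hp13 : p₁ ≠ p₃) (hp23 : p₂ ≠ p₃)
    (hq12 : q₁ ≠ q₂) (hq13 : q₁ ≠ q₃) (hq23 : q₂ ≠ q₃)
    (hbase : ‖p₂ - p₁‖ = ‖q₂ - q₁‖) (hbasepos : 0 < ‖p₂ - p₁‖)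
    (hangle : EuclideanGeometry.angle p₁ p₃ p₂ = EuclideanGeometry.angle q₁ q₃ q₂)
    (hratio : ‖p₃ - p₁‖ / ‖p₃ - p₂‖ = ‖q₃ - q₁‖ / ‖q₃ - q₂‖) :
    ‖p₃ - p₁‖ = ‖q₃ - q₁‖ ∧ ‖p₃ - p₂‖ = ‖q₃ - q₂‖ := by
  have law₁ := EuclideanGeometry.law_cos p₂ p₃ p₁
  have law₂ := EuclideanGeometry.law_cos q₂ q₃ q₁
  rw [EuclideanGeometry.angle_comm] at law₁ law₂
  simp only [dist_eq_norm] at law₁ law₂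
  rw [norm_sub_rev p₂ p₃, norm_sub_rev p₁ p₃] at law₁
  rw [norm_sub_rev q₂ q₃, norm_sub_rev q₁ q₃] at law₂
  set a := ‖p₃ - p₁‖ with ha
  set b := ‖p₃ - p₂‖ with hb
  set a' := ‖q₃ - q₁‖ with ha'
  set b' := ‖q₃ - q₂‖ with hb'
  set c := ‖p₂ - p₁‖ with hc
  have hbpos : 0 < b := by rw [hb, norm_sub_pos_iff]; exact (Ne.symm hp23)
  have hbpos' : 0 < b' := by rw [hb', norm_sub_pos_iff]; exact (Ne.symm hq23)
  have h3 : a * b' = a' * b := by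
    field_simp at hratio
    linarith [hratio]
  rw [hangle] at law₁
  rw [hbase] at law₁
  set k := Real.cos (EuclideanGeometry.angle q₁ q₃ q₂) with hk
  have key : c ^ 2 * b' ^ 2 = c ^ 2 * b ^ 2 := by
    rw [hbase]
    linear_combination b' ^ 2 * law₁ - b ^ 2 * law₂ + (a * b' + a' * b - 2 * k * b * b') * h3
  have hcpos : 0 < c := hbasepos
  have hb2 : b ^ 2 = b' ^ 2 := by
    have := mul_left_cancel₀ (a := c ^ 2) (by positivity) key
    linarith
  have hbb : b = b' := by nlinarith
  refine ⟨?_, hbb⟩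
  have : a * b' = a' * b' := by rw [h3, hbb]
  exact mul_right_cancel₀ (ne_of_gt hbpos') this
end
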